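/- Let ψ1, ψ2 be unit vectors in a finite-dimensional complex inner product space H with c = |⟨ψ1, ψ2⟩|² < 1, and let V = span{ψ1, ψ2}. Then { (|⟨ψ1, φ⟩|², |⟨ψ2, φ⟩|²) : φ ∈ V, ‖φ‖ = 1 } = E_c. -/

import Mathlib

open scoped ComplexInnerProductSpace
noncomputable section

/-- For `c ∈ [0,1]`, the region
`E_c = {(x1,x2) ∈ [0,1]² : (x1 + x2 − (1 − c))² ≤ 4·c·x1·x2}`. -/
lemma normC_ofReal' (r : ℝ) : ‖(r : ℂ)‖ = |r| := by
  rw [Complex.norm_real, Real.norm_eq_abs]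

def Ecal (c : ℝ) : Set (ℝ × ℝ) :=
  {x | x.1 ∈ Set.Icc (0 : ℝ) 1 ∧ x.2 ∈ Set.Icc (0 : ℝ) 1 ∧
    (x.1 + x.2 - (1 - c)) ^ 2 ≤ 4 * c * x.1 * x.2}

set_option maxHeartbeats 1600000

/-- For unit vectors `ψ1, ψ2` with `c = |⟨ψ1,ψ2⟩|² < 1` and
`V = span{ψ1, ψ2}`, one has
`{(|⟨ψ1,φ⟩|², |⟨ψ2,φ⟩|²) : φ ∈ V, ‖φ‖ = 1} = E_c`. -/
theorem stmt_12 {H : Type*} [NormedAddCommGroup H] [InnerProductSpace ℂ H]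
    [FiniteDimensional ℂ H]
    (ψ1 ψ2 : H) (hψ1 : ‖ψ1‖ = 1) (hψ2 : ‖ψ2‖ = 1)
    (c : ℝ) (hc : c = ‖⟪ψ1, ψ2⟫‖ ^ 2) (hc1 : c < 1) :
    {x : ℝ × ℝ | ∃ φ ∈ Submodule.span ℂ {ψ1, ψ2}, ‖φ‖ = 1 ∧
        x = (‖⟪ψ1, φ⟫‖ ^ 2, ‖⟪ψ2, φ⟫‖ ^ 2)} = Ecal c := by
  set g : ℂ := ⟪ψ1, ψ2⟫ with hg
  have hc0 : 0 ≤ c := by rw [hc]; positivity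
  set d : ℝ := Real.sqrt (1 - c) with hdd
  have hd2 : d ^ 2 = 1 - c := Real.sq_sqrt (by linarith)
  have hd0 : 0 < d := Real.sqrt_pos.mpr (by linarith)
  have hdne : (d : ℂ) ≠ 0 := Complex.ofReal_ne_zero.mpr hd0.ne'
  have h11 : ⟪ψ1, ψ1⟫ = 1 := by
    rw [inner_self_eq_norm_sq_to_K, hψ1]; norm_num
  have h22 : ⟪ψ2, ψ2⟫ = 1 := by
    rw [inner_self_eq_norm_sq_to_K, hψ2]; norm_num
  have h21 : ⟪ψ2, ψ1⟫ = starRingEnd ℂ g := by rw [hg, inner_conj_symm]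
  have hgg : g * starRingEnd ℂ g = (c : ℂ) := by
    rw [Complex.mul_conj, hc]
    norm_cast
    rw [Complex.normSq_eq_norm_sq]
  set e : H := (d : ℂ)⁻¹ • (ψ2 - g • ψ1) with he_def
  have h1w : ⟪ψ1, ψ2 - g • ψ1⟫ = 0 := by
    rw [inner_sub_right, inner_smul_right, h11, ← hg]; ring
  have h1e : ⟪ψ1, e⟫ = 0 := by rw [he_def, inner_smul_right, h1w, mul_zero]
  have h2w : ⟪ψ2, ψ2 - g • ψ1⟫ = ((1 - c : ℝ) : ℂ) := by
    rw [inner_sub_right, inner_smul_right, h22, h21]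
    push_cast
    rw [← hgg]
  have hww : ⟪ψ2 - g • ψ1, ψ2 - g • ψ1⟫ = ((1 - c : ℝ) : ℂ) := by
    rw [inner_sub_left, inner_smul_left, h2w, h1w, mul_zero, sub_zero]
  have hconjd : (starRingEnd ℂ) ((d : ℂ)⁻¹) = (d : ℂ)⁻¹ := by
    rw [map_inv₀, Complex.conj_ofReal]
  have hee : ⟪e, e⟫ = 1 := by
    rw [he_def, inner_smul_left, inner_smul_right, hww, hconjd]
    have hd2c : ((1 - c : ℝ) : ℂ) = (d : ℂ) ^ 2 := by
      rw [← hd2]; push_cast; ring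
    rw [hd2c]
    field_simp
  have he1 : ‖e‖ = 1 := by
    have h := inner_self_eq_norm_sq_to_K (𝕜 := ℂ) e
    rw [hee] at h
    have h' : ((‖e‖ ^ 2 : ℝ) : ℂ) = ((1 : ℝ) : ℂ) := by push_cast; exact h.symm
    have h'' : ‖e‖ ^ 2 = (1 : ℝ) := Complex.ofReal_injective h'
    nlinarith [norm_nonneg e]
  have h2e : ⟪ψ2, e⟫ = (d : ℂ) := by
    rw [he_def, inner_smul_right, h2w]
    have hd2c : ((1 - c : ℝ) : ℂ) = (d : ℂ) ^ 2 := by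
      rw [← hd2]; push_cast; ring
    rw [hd2c]
    field_simp
  have hψ2e : ψ2 = g • ψ1 + (d : ℂ) • e := by
    rw [he_def, smul_smul, mul_inv_cancel₀ hdne, one_smul]
    abel
  -- inner products and norms for a general element of the span
  have hip1 : ∀ α β : ℂ, ⟪ψ1, α • ψ1 + β • e⟫ = α := by
    intro α β
    rw [inner_add_right, inner_smul_right, inner_smul_right, h11, h1e]; ring
  have hip2 : ∀ α β : ℂ, ⟪ψ2, α • ψ1 + β • e⟫ = starRingEnd ℂ g * α + (d : ℂ) * β := by
    intro α β
    rw [inner_add_right, inner_smul_right, inner_smul_right, h21, h2e]; ring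
  have hnrm : ∀ α β : ℂ, ‖α • ψ1 + β • e‖ ^ 2 = ‖α‖ ^ 2 + ‖β‖ ^ 2 := by
    intro α β
    have hio : ⟪α • ψ1, β • e⟫ = 0 := by
      rw [inner_smul_left, inner_smul_right, h1e]; ring
    rw [norm_add_sq (𝕜 := ℂ), hio]
    simp [norm_smul, hψ1, he1, mul_pow]
  have hspan : ∀ φ : H, φ ∈ Submodule.span ℂ {ψ1, ψ2} ↔ ∃ α β : ℂ, φ = α • ψ1 + β • e := by
    intro φ
    rw [Submodule.mem_span_pair]
    constructor
    · rintro ⟨a, b, rfl⟩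
      refine ⟨a + b * g, b * (d : ℂ), ?_⟩
      rw [hψ2e]
      module
    · rintro ⟨α, β, rfl⟩
      refine ⟨α - β * (d : ℂ)⁻¹ * g, β * (d : ℂ)⁻¹, ?_⟩
      rw [he_def]
      module
  ext ⟨x1, x2⟩
  simp only [Set.mem_setOf_eq, Ecal, Set.mem_Icc]
  constructor
  · rintro ⟨φ, hφm, hφn, hxeq⟩
    obtain ⟨α, β, rfl⟩ := (hspan φ).1 hφm
    rw [Prod.mk.injEq] at hxeq
    obtain ⟨hx1, hx2⟩ := hxeq
    rw [hip1] at hx1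
    rw [hip2] at hx2
    have hsum : ‖α‖ ^ 2 + ‖β‖ ^ 2 = 1 := by
      have h := hnrm α β
      rw [hφn] at h
      linarith [h.symm]
    set u : ℂ := starRingEnd ℂ g * α with hu_def
    set v : ℂ := (d : ℂ) * β with hv_def
    have hu : ‖u‖ ^ 2 = c * ‖α‖ ^ 2 := by
      rw [hu_def, norm_mul, RCLike.norm_conj, mul_pow, ← hc]
    have hv : ‖v‖ ^ 2 = (1 - c) * ‖β‖ ^ 2 := by
      rw [hv_def, norm_mul, normC_ofReal', abs_of_pos hd0, mul_pow, hd2]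
    have hv' : ‖v‖ ^ 2 = (1 - c) * (1 - ‖α‖ ^ 2) := by
      rw [hv]; nlinarith [hsum]
    have tri1 : ‖u + v‖ ≤ ‖u‖ + ‖v‖ := norm_add_le u v
    have tri2 : ‖u‖ ≤ ‖u + v‖ + ‖v‖ := by
      have h := norm_add_le (u + v) (-v)
      simpa using h
    have tri3 : ‖v‖ ≤ ‖u + v‖ + ‖u‖ := by
      have h := norm_add_le (u + v) (-u)
      simpa [add_comm] using h
    have hx2le : x2 ≤ 1 := by
      rw [hx2]
      have h := norm_inner_le_norm (𝕜 := ℂ) ψ2 (α • ψ1 + β • e)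
      rw [hψ2, hφn, hip2] at h
      nlinarith [norm_nonneg (starRingEnd ℂ g * α + (d : ℂ) * β)]
    have hx1le : x1 ≤ 1 := by
      rw [hx1]; nlinarith [sq_nonneg ‖β‖, hsum]
    refine ⟨⟨by rw [hx1]; positivity, hx1le⟩,
      ⟨by rw [hx2]; positivity, hx2le⟩, ?_⟩
    have hx2' : x2 = ‖u + v‖ ^ 2 := hx2
    have e1 : x1 + x2 - (1 - c) = ‖u + v‖ ^ 2 + ‖u‖ ^ 2 - ‖v‖ ^ 2 := by
      rw [hx1, hx2']
      linear_combination hv' - hu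
    have e2 : 4 * c * x1 * x2 = 4 * ‖u‖ ^ 2 * ‖u + v‖ ^ 2 := by
      rw [hx1, hx2']
      linear_combination (-4) * ‖u + v‖ ^ 2 * hu
    rw [e1, e2]
    have hprod : (0:ℝ) ≤ ((‖u‖ + ‖v‖) - ‖u + v‖) * ((‖u + v‖ + ‖v‖) - ‖u‖) *
        ((‖u + v‖ + ‖u‖) - ‖v‖) * (‖u + v‖ + ‖u‖ + ‖v‖) := by
      have a1 : (0:ℝ) ≤ (‖u‖ + ‖v‖) - ‖u + v‖ := by linarith
      have a2 : (0:ℝ) ≤ (‖u + v‖ + ‖v‖) - ‖u‖ := by linarith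
      have a3 : (0:ℝ) ≤ (‖u + v‖ + ‖u‖) - ‖v‖ := by linarith
      have a4 : (0:ℝ) ≤ ‖u + v‖ + ‖u‖ + ‖v‖ := by positivity
      exact mul_nonneg (mul_nonneg (mul_nonneg a1 a2) a3) a4
    have hkey : 4 * ‖u‖ ^ 2 * ‖u + v‖ ^ 2 - (‖u + v‖ ^ 2 + ‖u‖ ^ 2 - ‖v‖ ^ 2) ^ 2 =
        ((‖u‖ + ‖v‖) - ‖u + v‖) * ((‖u + v‖ + ‖v‖) - ‖u‖) *
        ((‖u + v‖ + ‖u‖) - ‖v‖) * (‖u + v‖ + ‖u‖ + ‖v‖) := by ring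
    linarith only [hprod, hkey]
  · rintro ⟨⟨hx10, hx11⟩, ⟨hx20, hx21⟩, hineq⟩
    set s : ℝ := Real.sqrt (c * x1) with hs_def
    set t : ℝ := Real.sqrt ((1 - c) * (1 - x1)) with ht_def
    have hs0 : 0 ≤ s := Real.sqrt_nonneg _
    have ht0 : 0 ≤ t := Real.sqrt_nonneg _
    have hs2 : s ^ 2 = c * x1 := Real.sq_sqrt (mul_nonneg hc0 hx10)
    have ht2 : t ^ 2 = (1 - c) * (1 - x1) :=
      Real.sq_sqrt (mul_nonneg (by linarith) (by linarith))
    have hB : (x2 - s ^ 2 - t ^ 2) ^ 2 ≤ (2 * s * t) ^ 2 := by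
      have h4 : (2 * s * t) ^ 2 = 4 * (c * x1) * ((1 - c) * (1 - x1)) := by
        rw [show (2 * s * t) ^ 2 = 4 * s ^ 2 * t ^ 2 by ring, hs2, ht2]
      rw [hs2, ht2, h4]
      have hkeyB : (x2 - c * x1 - (1 - c) * (1 - x1)) ^ 2 -
          4 * (c * x1) * ((1 - c) * (1 - x1)) =
          (x1 + x2 - (1 - c)) ^ 2 - 4 * c * x1 * x2 := by ring
      linarith only [hineq, hkeyB]
    -- find the phase parameter r
    have hr : ∃ r : ℝ, r ^ 2 ≤ 1 ∧ s ^ 2 + t ^ 2 + 2 * s * t * r = x2 := by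
      by_cases hst : s * t = 0
      · have h0 : (x2 - s ^ 2 - t ^ 2) ^ 2 ≤ 0 := by
          have : (2 * s * t) ^ 2 = 0 := by rw [show 2 * s * t = 2 * (s * t) by ring, hst]; ring
          linarith [hB, this]
        have h1 : (x2 - s ^ 2 - t ^ 2) ^ 2 = 0 :=
          le_antisymm h0 (sq_nonneg _)
        have h2 : x2 - s ^ 2 - t ^ 2 = 0 := by
          exact pow_eq_zero_iff (by norm_num) |>.mp h1
        exact ⟨0, by norm_num, by linarith⟩
      · have hst0 : 0 < s * t := lt_of_le_of_ne (mul_nonneg hs0 ht0) (Ne.symm hst)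
        have h2st : (0:ℝ) < 2 * s * t := by linarith
        refine ⟨(x2 - s ^ 2 - t ^ 2) / (2 * s * t), ?_, ?_⟩
        · rw [div_pow, div_le_one (by positivity)]
          exact hB
        · have hcan : 2 * s * t * ((x2 - s ^ 2 - t ^ 2) / (2 * s * t)) =
              x2 - s ^ 2 - t ^ 2 := mul_div_cancel₀ _ h2st.ne'
          linarith [hcan]
      -- end hr
    obtain ⟨r, hr1, hrx⟩ := hr
    set w : ℝ := Real.sqrt (1 - r ^ 2) with hw_def
    have hw2 : w ^ 2 = 1 - r ^ 2 := Real.sq_sqrt (by linarith)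
    set z : ℂ := (r : ℂ) + (w : ℂ) * Complex.I with hz_def
    have hz1 : ‖z‖ = 1 := by
      have h : ‖z‖ ^ 2 = 1 := by
        rw [hz_def, Complex.sq_norm, Complex.normSq_apply]
        simp
        nlinarith [hw2, sq_nonneg r, sq_nonneg w]
      nlinarith [norm_nonneg z]
    have hx1s : Real.sqrt x1 ^ 2 = x1 := Real.sq_sqrt hx10
    set α : ℂ := if g = 0 then (Real.sqrt x1 : ℂ)
      else (Real.sqrt x1 : ℂ) * z * (g / (‖g‖ : ℂ)) with hα_def
    set β : ℂ := (Real.sqrt (1 - x1) : ℂ) with hβ_def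
    have hα2 : ‖α‖ ^ 2 = x1 := by
      rw [hα_def]
      by_cases h0 : g = 0
      · rw [if_pos h0, normC_ofReal', abs_of_nonneg (Real.sqrt_nonneg _), hx1s]
      · rw [if_neg h0, norm_mul, norm_mul, norm_div, normC_ofReal',
          normC_ofReal', hz1, abs_of_nonneg (Real.sqrt_nonneg _),
          abs_of_nonneg (norm_nonneg g), div_self (norm_ne_zero_iff.mpr h0)]
        rw [mul_one, mul_one, hx1s]
    have hβ2 : ‖β‖ ^ 2 = 1 - x1 := by
      rw [hβ_def, normC_ofReal', abs_of_nonneg (Real.sqrt_nonneg _)]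
      exact Real.sq_sqrt (by linarith)
    have hnφ : ‖α • ψ1 + β • e‖ = 1 := by
      have h := hnrm α β
      rw [hα2, hβ2] at h
      have h' : ‖α • ψ1 + β • e‖ ^ 2 = 1 := by rw [h]; ring
      nlinarith [norm_nonneg (α • ψ1 + β • e)]
    have hmem : α • ψ1 + β • e ∈ Submodule.span ℂ {ψ1, ψ2} := by
      apply Submodule.add_mem
      · exact Submodule.smul_mem _ _ (Submodule.subset_span (by simp))
      · apply Submodule.smul_mem
        rw [he_def]
        apply Submodule.smul_mem
        apply Submodule.sub_mem
        · exact Submodule.subset_span (by simp)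
        · exact Submodule.smul_mem _ _ (Submodule.subset_span (by simp))
    -- compute the second inner product value
    have hcombo : starRingEnd ℂ g * α + (d : ℂ) * β = (s : ℂ) * z + (t : ℂ) := by
      have hdβ : (d : ℂ) * β = (t : ℂ) := by
        rw [hβ_def, ht_def, Real.sqrt_mul (by linarith : (0:ℝ) ≤ 1 - c), ← hdd]
        push_cast
        ring
      rw [hdβ]
      congr 1
      rw [hα_def]
      by_cases h0 : g = 0
      · rw [if_pos h0]
        have hc00 : c = 0 := by rw [hc, h0]; simp
        have hs00 : s = 0 := by rw [hs_def, hc00]; simp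
        rw [h0, hs00]
        simp
      · rw [if_neg h0]
        have hgn : (‖g‖ : ℂ) ≠ 0 := Complex.ofReal_ne_zero.mpr (norm_ne_zero_iff.mpr h0)
        have hsc : (s : ℂ) = (Real.sqrt x1 : ℂ) * (‖g‖ : ℂ) := by
          have : s = Real.sqrt x1 * ‖g‖ := by
            rw [hs_def, hc, mul_comm (‖g‖^2) x1, Real.sqrt_mul hx10,
              Real.sqrt_sq (norm_nonneg g)]
          rw [this]; push_cast; ring
        have hgg2 : starRingEnd ℂ g * g = ((‖g‖ : ℂ)) ^ 2 := by
          rw [mul_comm, Complex.mul_conj, Complex.normSq_eq_norm_sq]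
          push_cast; ring
        rw [hsc]
        calc starRingEnd ℂ g * ((Real.sqrt x1 : ℂ) * z * (g / (‖g‖ : ℂ)))
            = (Real.sqrt x1 : ℂ) * z * ((starRingEnd ℂ g * g) / (‖g‖ : ℂ)) := by ring
          _ = (Real.sqrt x1 : ℂ) * z * (((‖g‖ : ℂ)) ^ 2 / (‖g‖ : ℂ)) := by rw [hgg2]
          _ = (Real.sqrt x1 : ℂ) * z * (‖g‖ : ℂ) := by
              rw [sq, mul_div_assoc, div_self hgn, mul_one]
          _ = (Real.sqrt x1 : ℂ) * (‖g‖ : ℂ) * z := by ring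
    have hzval : ‖(s : ℂ) * z + (t : ℂ)‖ ^ 2 = x2 := by
      set ζ : ℂ := (s : ℂ) * z + (t : ℂ) with hζ_def
      have hre : ζ.re = s * r + t := by
        rw [hζ_def, hz_def]; simp
      have him : ζ.im = s * w := by
        rw [hζ_def, hz_def]; simp
      have h : ‖ζ‖ ^ 2 = ζ.re ^ 2 + ζ.im ^ 2 := by
        rw [Complex.sq_norm, Complex.normSq_apply]; ring
      rw [h, hre, him]
      linear_combination s ^ 2 * hw2 + hrx
    refine ⟨α • ψ1 + β • e, hmem, hnφ, ?_⟩
    rw [Prod.mk.injEq]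
    constructor
    · rw [hip1, hα2]
    · rw [hip2, hcombo, hzval]
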